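/- Let Π be a normal logic program and Φ its explicit version. A set M ⊆ At(Π) is a stable model of Π iff M^¬ is a stable model of Φ, where M^¬ = M ∪ {¬p : p ∈ At(Π), p ∉ M}. -/

import Mathlib

namespace DLWFS

universe u

/-- Ground literals over a type `A` of atoms: atoms and their classical complements. -/
inductive Lit (A : Type u) : Type u where
  | pos : A → Lit A
  | neg : A → Lit A

/-- The classical complement `p̄` of a literal `p`. -/
def Lit.compl {A : Type u} : Lit A → Lit A
  | .pos a => .neg a
  | .neg a => .pos a

/-- The three kinds of rules of a defeasible theory. -/
inductive RuleKind : Type where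
  | strict
  | defeasible
  | defeater
deriving DecidableEq

/-- A rule of a defeasible theory: a kind, a body (a set of literals) and a head literal. -/
structure DRule (A : Type u) where
  kind : RuleKind
  body : Set (Lit A)
  head : Lit A

/-- A defeasible theory `D = ⟨R, C, ≺⟩`. -/
structure DTheory (A : Type u) where
  rules : Set (DRule A)
  conflicts : Set (Set (Lit A))
  prec : DRule A → DRule A → Prop

namespace DTheory

variable {A : Type u}

/-- The strict rules `R_s`. -/
def Rs (D : DTheory A) : Set (DRule A) := {r ∈ D.rules | r.kind = RuleKind.strict}

/-- The defeasible rules `R_d`. -/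
def Rd (D : DTheory A) : Set (DRule A) := {r ∈ D.rules | r.kind = RuleKind.defeasible}

/-- The defeater rules `R_u`. -/
def Ru (D : DTheory A) : Set (DRule A) := {r ∈ D.rules | r.kind = RuleKind.defeater}

/-- `C[p]`: the conflict sets containing literal `p`. -/
def Cset (D : DTheory A) (p : Lit A) : Set (Set (Lit A)) := {c ∈ D.conflicts | p ∈ c}

/-- Structural conditions in the definition of a defeasible theory: a countable set of
rules with finite bodies, a countable set of finite conflict sets containing every
minimal conflict set `{p, ¬p}`, and an acyclic priority relation over non-strict rules. -/
def WellFormed (D : DTheory A) : Prop :=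
  D.rules.Countable ∧ D.conflicts.Countable ∧
  (∀ r ∈ D.rules, r.body.Finite) ∧
  (∀ c ∈ D.conflicts, c.Finite) ∧
  (∀ p : A, ({Lit.pos p, Lit.neg p} : Set (Lit A)) ∈ D.conflicts) ∧
  (∀ r s, D.prec r s → r.kind ≠ RuleKind.strict ∧ s.kind ≠ RuleKind.strict) ∧
  (∀ r, ¬ Relation.TransGen D.prec r r)

/-- `C = C_MIN`: the conflict sets are exactly the minimal ones `{p, ¬p}`. -/
def MinimalConflicts (D : DTheory A) : Prop :=
  D.conflicts = {c | ∃ p : A, c = ({Lit.pos p, Lit.neg p} : Set (Lit A))}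

end DTheory

/-- A 3-valued interpretation: a pair `⟨T, F⟩` of sets. -/
abbrev Interp (L : Type u) : Type u := Set L × Set L

variable {A : Type u}

/-- `S` is ADL-unfounded with respect to theory `D` and interpretation `I = ⟨T, F⟩`. -/
def ADLUnfounded (D : DTheory A) (I : Interp (Lit A)) (S : Set (Lit A)) : Prop :=
  ∀ p ∈ S,
    (∀ r ∈ D.Rs, r.head = p → (r.body ∩ (I.2 ∪ S)).Nonempty) ∧
    (∀ r ∈ D.Rd, r.head = p →
      (r.body ∩ (I.2 ∪ S)).Nonempty ∨
      ∃ c ∈ D.conflicts, p ∈ c ∧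
        ∀ q ∈ c \ {p}, ∃ s ∈ D.rules, s.head = q ∧ s.body ⊆ I.1 ∧
          (D.prec r s ∨ s.kind = RuleKind.strict))

/-- `S` is NDL-unfounded with respect to theory `D` and interpretation `I = ⟨T, F⟩`. -/
def NDLUnfounded (D : DTheory A) (I : Interp (Lit A)) (S : Set (Lit A)) : Prop :=
  ∀ p ∈ S,
    (∀ r ∈ D.Rs, r.head = p → (r.body ∩ (I.2 ∪ S)).Nonempty) ∧
    (∀ r ∈ D.Rd, r.head = p →
      (r.body ∩ (I.2 ∪ S)).Nonempty ∨
      ∃ c ∈ D.conflicts, p ∈ c ∧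
        ∀ q ∈ c \ {p}, ∃ s ∈ D.rules, s.head = q ∧ s.body ⊆ I.1 ∧
          ¬ D.prec s r)

/-- `U_D(I)` for ADL: the union of all ADL-unfounded sets. -/
def UA (D : DTheory A) (I : Interp (Lit A)) : Set (Lit A) :=
  ⋃₀ {S | ADLUnfounded D I S}

/-- `U_D(I)` for NDL: the union of all NDL-unfounded sets. -/
def UN (D : DTheory A) (I : Interp (Lit A)) : Set (Lit A) :=
  ⋃₀ {S | NDLUnfounded D I S}

/-- `T_D(I)`: the literals having a witness of provability with respect to `I = ⟨T, F⟩`. -/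
def TD (D : DTheory A) (I : Interp (Lit A)) : Set (Lit A) :=
  {p | ∃ r ∈ D.rules, r.head = p ∧ r.body ⊆ I.1 ∧
    (r.kind = RuleKind.strict ∨
      (r.kind = RuleKind.defeasible ∧
        ∀ c ∈ D.conflicts, p ∈ c →
          ∃ q ∈ c \ {p}, ∀ s ∈ D.rules, s.head = q →
            (D.prec s r ∨ (s.body ∩ I.2).Nonempty)))}

/-- `W_D` for ADL. -/
def WA (D : DTheory A) (I : Interp (Lit A)) : Interp (Lit A) := (TD D I, UA D I)

/-- `W_D` for NDL. -/
def WN (D : DTheory A) (I : Interp (Lit A)) : Interp (Lit A) := (TD D I, UN D I)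

/-- `I` is the well-founded model for the operator `W`: the least fixpoint of `W`
(componentwise order). -/
def IsWFModel {L : Type u} (W : Interp L → Interp L) (I : Interp L) : Prop :=
  W I = I ∧ ∀ J, W J = J → I.1 ⊆ J.1 ∧ I.2 ⊆ J.2

/-- A rule of a normal logic program: `head ← pos, ∼neg`. -/
structure NRule (A : Type u) where
  head : A
  pos : Set A
  neg : Set A

/-- A normal logic program: a set of rules. -/
abbrev NProgram (A : Type u) : Type u := Set (NRule A)

/-- Structural conditions in the definition of a normal logic program: a countable
set of ground rules with finite bodies. -/
def NProgram.WellFormed (P : NProgram A) : Prop :=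
  P.Countable ∧ ∀ r ∈ P, r.pos.Finite ∧ r.neg.Finite

/-- The immediate consequence operator `T_Π` on 3-valued interpretations. -/
def TP (P : NProgram A) (I : Interp A) : Set A :=
  {a | ∃ r ∈ P, r.head = a ∧ r.pos ⊆ I.1 ∧ r.neg ⊆ I.2}

/-- `S` is an unfounded set of program `P` with respect to interpretation `I = ⟨T, F⟩`. -/
def PUnfounded (P : NProgram A) (I : Interp A) (S : Set A) : Prop :=
  ∀ p ∈ S, ∀ r ∈ P, r.head = p →
    (r.pos ∩ (I.2 ∪ S)).Nonempty ∨ (r.neg ∩ I.1).Nonempty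

/-- `U_Π(I)`: the greatest unfounded set (union of all unfounded sets). -/
def UP (P : NProgram A) (I : Interp A) : Set A :=
  ⋃₀ {S | PUnfounded P I S}

/-- `W_Π(I) = ⟨T_Π(I), U_Π(I)⟩`. -/
def WP (P : NProgram A) (I : Interp A) : Interp A := (TP P I, UP P I)

/-- Transfinite iteration of an operator `W` from `⊥`, taking suprema at limit ordinals. -/
noncomputable def iterW {α : Type*} [CompleteLattice α] (W : α → α) : Ordinal.{0} → α :=
  fun o =>
    Ordinal.limitRecOn (motive := fun _ => α) o ⊥ (fun _ ih => W ih)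
      (fun o' _ ih => ⨆ x : Set.Iio o', ih x.1 x.2)

/-- One step of the immediate consequence operator for a set of defeasible-theory rules. -/
def TRstep (R : Set (DRule A)) (S : Set (Lit A)) : Set (Lit A) :=
  {p | ∃ r ∈ R, r.head = p ∧ r.body ⊆ S}

/-- The finite iterates `T_R ↑ n`. -/
def TRiter (R : Set (DRule A)) : ℕ → Set (Lit A)
  | 0 => ∅
  | n + 1 => TRstep R (TRiter R n)

/-- `Cl(R) = T_R ↑ ω`. -/
def ClR (R : Set (DRule A)) : Set (Lit A) := ⋃ n, TRiter R n

/-- The `α`-reduct `D_α^S` of a defeasible theory. -/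
def alphaReduct (D : DTheory A) (S : Set (Lit A)) : Set (DRule A) :=
  D.Rs ∪ {r ∈ D.Rd | ∀ c ∈ D.conflicts, r.head ∈ c → ∃ q ∈ c \ {r.head}, q ∉ S}

/-- The ambiguity-propagating operator `α_D(S) = Cl(D_α^S)`. -/
def alphaOp (D : DTheory A) (S : Set (Lit A)) : Set (Lit A) := ClR (alphaReduct D S)

/-- The `β`-reduct `D_β^S` of a defeasible theory. -/
def betaReduct (D : DTheory A) (S : Set (Lit A)) : Set (DRule A) :=
  D.Rs ∪ {r ∈ D.Rd | ∀ c ∈ D.conflicts, r.head ∈ c →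
    ∃ q ∈ c \ {r.head}, ∀ s ∈ D.rules, s.head = q → (¬ s.body ⊆ S ∨ D.prec s r)}

/-- The ambiguity-blocking operator `β_D(S) = Cl(D_β^S)`. -/
def betaOp (D : DTheory A) (S : Set (Lit A)) : Set (Lit A) := ClR (betaReduct D S)

/-- `S` is an `α`-stable set of `D`. -/
def AlphaStable (D : DTheory A) (S : Set (Lit A)) : Prop := alphaOp D S = S

/-- `S` is a `β`-stable set of `D`. -/
def BetaStable (D : DTheory A) (S : Set (Lit A)) : Prop := betaOp D S = S

/-- The sequence `X_D↑λ`: `X↑0 = ∅`, `X↑(λ+1) = β_D(β_D(X↑λ))`, unions at limits. -/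
noncomputable def Xseq (D : DTheory A) : Ordinal.{0} → Set (Lit A) :=
  iterW (fun S => betaOp D (betaOp D S))

/-- The Gelfond–Lifschitz reduct `Π^S`. -/
def glReduct (P : NProgram A) (S : Set A) : NProgram A :=
  {r' | ∃ r ∈ P, r.neg ∩ S = ∅ ∧ r' = NRule.mk r.head r.pos ∅}

/-- One step of the immediate consequence operator for a NAF-free program. -/
def TPstep (P : NProgram A) (S : Set A) : Set A :=
  {a | ∃ r ∈ P, r.head = a ∧ r.pos ⊆ S}

/-- The finite iterates `T_Π ↑ n` of a NAF-free program. -/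
def TPiter (P : NProgram A) : ℕ → Set A
  | 0 => ∅
  | n + 1 => TPstep P (TPiter P n)

/-- `Cl(Π) = T_Π ↑ ω`. -/
def ClP (P : NProgram A) : Set A := ⋃ n, TPiter P n

/-- The Gelfond–Lifschitz operator `γ_Π(S) = Cl(Π^S)`. -/
def gamma (P : NProgram A) (S : Set A) : Set A := ClP (glReduct P S)

/-- `S` is a stable model of `P`. -/
def StableModel (P : NProgram A) (S : Set A) : Prop := gamma P S = S

/-- `Prod(C[p])`: all sets obtained by choosing one literal other than `p` from each
conflict set containing `p`. -/
def ProdC (D : DTheory A) (p : Lit A) : Set (Set (Lit A)) :=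
  {Q | ∃ f : Set (Lit A) → Lit A,
    (∀ c ∈ D.conflicts, p ∈ c → f c ∈ c \ {p}) ∧
    Q = f '' {c ∈ D.conflicts | p ∈ c}}

/-- The logic program translation `Π_D` of a defeasible theory `D` (negative literals
are treated as fresh atoms, so the atoms of the program are the literals of `D`). -/
def lpTrans (D : DTheory A) : NProgram (Lit A) :=
  {r' | ∃ r ∈ D.Rs, r' = NRule.mk r.head r.body ∅} ∪
  {r' | ∃ r ∈ D.Rd, ∃ Q ∈ ProdC D r.head, r' = NRule.mk r.head r.body Q}

/-- The explicit version `Φ` of a normal program `Π`: atoms of `Φ` are the literals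
over the atoms of `Π` (`¬p` being a fresh atom). -/
def explicitVer (P : NProgram A) : NProgram (Lit A) :=
  {r' | ∃ r ∈ P, r' = NRule.mk (Lit.pos r.head) (Lit.pos '' r.pos ∪ Lit.neg '' r.neg) ∅} ∪
  {r' | ∃ p : A, r' = NRule.mk (Lit.neg p) ∅ {Lit.pos p}}

/-- The minimal conflict sets over atom type `A`. -/
def CMin (A : Type u) : Set (Set (Lit A)) :=
  {c | ∃ p : A, c = ({Lit.pos p, Lit.neg p} : Set (Lit A))}

/-- The defeasible theory translation `D_Π` of a normal program `Π`: each program rule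
becomes a strict rule (default literals `∼b` becoming negative literals `¬b`), and each
atom `p` yields a presumption `∅ ⇒ ¬p`; conflict sets are minimal and `≺` is empty. -/
def dtTrans (P : NProgram A) : DTheory A :=
  { rules :=
      {e | ∃ r ∈ P, e = DRule.mk RuleKind.strict
            (Lit.pos '' r.pos ∪ Lit.neg '' r.neg) (Lit.pos r.head)} ∪
      {e | ∃ p : A, e = DRule.mk RuleKind.defeasible ∅ (Lit.neg p)}
    conflicts := CMin A
    prec := fun _ _ => False }

/-- `M^¬ = M ∪ {¬p : p ∉ M}`, atoms being identified with positive literals. -/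
def negCompl (M : Set A) : Set (Lit A) :=
  Lit.pos '' M ∪ Lit.neg '' {p | p ∉ M}

end DLWFS

namespace DLWFS

section Aux

variable {A : Type*}

lemma TPstep_mono (P : NProgram A) : Monotone (TPstep P) := by
  rintro S T h a ⟨r, hr, h1, h2⟩
  exact ⟨r, hr, h1, h2.trans h⟩

lemma TPiter_mono (P : NProgram A) : Monotone (TPiter P) := by
  refine monotone_nat_of_le_succ fun n => ?_
  induction n with
  | zero => simp [TPiter]
  | succ n ih => exact TPstep_mono P ih

lemma finite_subset_iter {α : Type*} {g : ℕ → Set α} (mono : Monotone g) :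
    ∀ {s : Set α}, s.Finite → s ⊆ (⋃ n, g n) → ∃ n, s ⊆ g n := by
  intro s hf
  refine Set.Finite.induction_on (motive := fun s _ => s ⊆ (⋃ n, g n) → ∃ n, s ⊆ g n) s hf (fun _ => ⟨0, by simp⟩) ?_
  intro a t ha hft ih hsub
  obtain ⟨n1, h1⟩ := ih ((Set.subset_insert _ _).trans hsub)
  obtain ⟨n2, h2⟩ := Set.mem_iUnion.mp (hsub (Set.mem_insert _ _))
  exact ⟨max n1 n2, Set.insert_subset (mono (le_max_right n1 n2) h2)
    (h1.trans (mono (le_max_left n1 n2)))⟩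

lemma ClP_closed (P : NProgram A) (hfin : ∀ r ∈ P, r.pos.Finite) :
    TPstep P (ClP P) ⊆ ClP P := by
  rintro a ⟨r, hr, hh, hpos⟩
  obtain ⟨n, hn⟩ := finite_subset_iter (TPiter_mono P) (hfin r hr) hpos
  exact Set.mem_iUnion.mpr ⟨n + 1, ⟨r, hr, hh, hn⟩⟩

lemma pos_mem_negCompl {M : Set A} {p : A} :
    Lit.pos p ∈ negCompl M ↔ p ∈ M := by
  constructor
  · rintro (⟨q, hq, h⟩ | ⟨q, hq, h⟩)
    · cases h; exact hq
    · cases h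
  · intro h; exact Or.inl ⟨p, h, rfl⟩

/-- The key computation: `γ_Φ(M^¬) = (γ_Π(M))^¬`-ish. -/
lemma gamma_explicit (P : NProgram A) (hwf : P.WellFormed) (M : Set A) :
    gamma (explicitVer P) (negCompl M) =
      Lit.pos '' gamma P M ∪ Lit.neg '' {p | p ∉ M} := by
  set R : NProgram A := glReduct P M with hR
  set Q : NProgram (Lit A) := glReduct (explicitVer P) (negCompl M) with hQ
  have hRfin : ∀ r' ∈ R, r'.pos.Finite := by
    rintro r' ⟨r, hr, -, rfl⟩
    exact (hwf.2 r hr).1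
  -- the negative facts are rules of Q
  have hnegrule : ∀ p : A, p ∉ M → NRule.mk (Lit.neg p) ∅ (∅ : Set (Lit A)) ∈ Q := by
    intro p hp
    refine ⟨NRule.mk (Lit.neg p) ∅ {Lit.pos p}, Or.inr ⟨p, rfl⟩, ?_, rfl⟩
    ext x
    simp only [Set.mem_inter_iff, Set.mem_singleton_iff, Set.mem_empty_iff_false, iff_false,
      not_and]
    rintro rfl
    intro hx
    exact hp (pos_mem_negCompl.mp hx)
  have hposrule : ∀ r ∈ P, r.neg ∩ M = ∅ →
      NRule.mk (Lit.pos r.head) (Lit.pos '' r.pos ∪ Lit.neg '' r.neg) (∅ : Set (Lit A)) ∈ Q := by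
    intro r hr _
    exact ⟨NRule.mk (Lit.pos r.head) (Lit.pos '' r.pos ∪ Lit.neg '' r.neg) ∅,
      Or.inl ⟨r, hr, rfl⟩, by simp, rfl⟩
  -- Claim A
  have claimA : ∀ n, Lit.pos '' TPiter R n ∪ Lit.neg '' {p | p ∉ M} ⊆ TPiter Q (n + 1) := by
    intro n
    induction n with
    | zero =>
      rintro x (⟨b, hb, rfl⟩ | ⟨p, hp, rfl⟩)
      · simp [TPiter] at hb
      · exact ⟨_, hnegrule p hp, rfl, by simp⟩
    | succ n ih =>
      rintro x (⟨b, hb, rfl⟩ | ⟨p, hp, rfl⟩)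
      · obtain ⟨r', hr'R, hh, hposn⟩ := hb
        obtain ⟨r, hrP, hnegM, rfl⟩ := hr'R
        refine ⟨_, hposrule r hrP hnegM, by simpa using hh, ?_⟩
        rintro y (⟨z, hz, rfl⟩ | ⟨z, hz, rfl⟩)
        · exact ih (Or.inl ⟨z, hposn hz, rfl⟩)
        · refine ih (Or.inr ⟨z, ?_, rfl⟩)
          intro hzM
          exact absurd hnegM (by intro h; exact (h ▸ ⟨hz, hzM⟩ : z ∈ (∅ : Set A)))
      · exact ⟨_, hnegrule p hp, rfl, by simp⟩
  -- Claim B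
  have claimB : ∀ n, TPiter Q n ⊆ Lit.pos '' ClP R ∪ Lit.neg '' {p | p ∉ M} := by
    intro n
    induction n with
    | zero => simp [TPiter]
    | succ n ih =>
      rintro x ⟨q, hqQ, hh, hbody⟩
      obtain ⟨y, hyΦ, hyneg, rfl⟩ := hqQ
      rcases hyΦ with ⟨r, hrP, rfl⟩ | ⟨p, rfl⟩
      · -- rule from Π
        left
        simp only at hh hbody
        have hpos : r.pos ⊆ ClP R := by
          intro z hz
          have := ih (hbody (Or.inl ⟨z, hz, rfl⟩))
          rcases this with ⟨b, hb, hbe⟩ | ⟨b, _, hbe⟩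
          · cases hbe; exact hb
          · cases hbe
        have hneg : r.neg ∩ M = ∅ := by
          ext z
          simp only [Set.mem_inter_iff, Set.mem_empty_iff_false, iff_false, not_and]
          intro hz hzM
          have := ih (hbody (Or.inr ⟨z, hz, rfl⟩))
          rcases this with ⟨b, _, hbe⟩ | ⟨b, hb, hbe⟩
          · cases hbe
          · cases hbe; exact hb hzM
        refine ⟨r.head, ClP_closed R hRfin ⟨NRule.mk r.head r.pos ∅, ⟨r, hrP, hneg, rfl⟩, rfl, hpos⟩, hh⟩
      · -- presumption fact
        right
        simp only at hh hyneg
        refine ⟨p, ?_, hh⟩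
        intro hpM
        have : Lit.pos p ∈ ({Lit.pos p} : Set (Lit A)) ∩ negCompl M :=
          ⟨rfl, pos_mem_negCompl.mpr hpM⟩
        rw [hyneg] at this
        exact this
  -- combine
  apply Set.Subset.antisymm
  · intro x hx
    obtain ⟨n, hn⟩ := Set.mem_iUnion.mp hx
    exact claimB n hn
  · rintro x (⟨b, hb, rfl⟩ | ⟨p, hp, rfl⟩)
    · obtain ⟨n, hn⟩ := Set.mem_iUnion.mp hb
      exact Set.mem_iUnion.mpr ⟨n + 1, claimA n (Or.inl ⟨b, hn, rfl⟩)⟩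
    · exact Set.mem_iUnion.mpr ⟨1, claimA 0 (Or.inr ⟨p, hp, rfl⟩)⟩

end Aux

/-- Let `Π` be a normal program and `Φ` its explicit version. A set `M ⊆ At(Π)` is a
stable model of `Π` iff `M^¬ = M ∪ {¬p : p ∉ M}` is a stable model of `Φ`. -/
theorem explicit_version_stable_models {A : Type*} (P : NProgram A) (hwf : P.WellFormed) :
    ∀ M : Set A, StableModel P M ↔ StableModel (explicitVer P) (negCompl M) := by
  intro M
  unfold StableModel
  rw [gamma_explicit P hwf M]
  unfold negCompl
  constructor
  · intro h; rw [h]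
  · intro h
    apply Set.Subset.antisymm
    · intro x hx
      have hmem : Lit.pos x ∈ Lit.pos '' M ∪ Lit.neg '' {p | p ∉ M} := by
        rw [← h]; exact Or.inl ⟨x, hx, rfl⟩
      rcases hmem with ⟨b, hb, hbe⟩ | ⟨b, _, hbe⟩
      · cases hbe; exact hb
      · cases hbe
    · intro x hx
      have hmem : Lit.pos x ∈ Lit.pos '' gamma P M ∪ Lit.neg '' {p | p ∉ M} := by
        rw [h]; exact Or.inl ⟨x, hx, rfl⟩
      rcases hmem with ⟨b, hb, hbe⟩ | ⟨b, _, hbe⟩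
      · cases hbe; exact hb
      · cases hbe

end DLWFS
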